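/- Let a>0 and α∈ℝ∖{0} with aα≠−1. Then there exist δ>0 and c>0 such that for every k∈ℂ with |Im k| ≤ δ one has |(2k+iα)² + α²·exp(4ika)| ≥ c·|k|. In particular, D(k)=(2k+iα)²+α²·exp(4ika) has no zeros in the strip {|Im k| ≤ δ} other than k=0, where its zero is simple with derivative 4iα(1+aα) ≠ 0. -/

import Mathlib

open Complex MeasureTheory Filter Topology
open scoped ENNReal

noncomputable section

/-- `L1(x,y;k) = −α(2k+iα)·exp(ik|x+a|)·exp(ik|y+a|)`. -/
def L1 (a α x y : ℝ) (k : ℂ) : ℂ :=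
  -(α : ℂ) * (2 * k + I * α) * Complex.exp (I * k * (|x + a| : ℝ)) *
    Complex.exp (I * k * (|y + a| : ℝ))

/-- `L2(x,y;k) = iα²·exp(2ika)·exp(ik|x+a|)·exp(ik|y−a|)`. -/
def L2 (a α x y : ℝ) (k : ℂ) : ℂ :=
  I * (α : ℂ) ^ 2 * Complex.exp (2 * I * k * a) * Complex.exp (I * k * (|x + a| : ℝ)) *
    Complex.exp (I * k * (|y - a| : ℝ))

/-- `f(x,y;k) = L1 + L2 + L3 + L4`, with `L3(x,y;k)=L2(−x,−y;k)` and `L4(x,y;k)=L1(−x,−y;k)`. -/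
def fker (a α x y : ℝ) (k : ℂ) : ℂ :=
  L1 a α x y k + L2 a α x y k + L2 a α (-x) (-y) k + L1 a α (-x) (-y) k

/-- `D(k) = (2k+iα)² + α²·exp(4ika)`. -/
def Dden (a α : ℝ) (k : ℂ) : ℂ :=
  (2 * k + I * α) ^ 2 + (α : ℂ) ^ 2 * Complex.exp (4 * I * k * a)

/-- `U0(t;x,y) = (4πit)^{−1/2}·exp(i|x−y|²/(4t))`, principal branch. -/
def U0 (t x y : ℝ) : ℂ :=
  (4 * Real.pi * I * t : ℂ) ^ (-(1 / 2 : ℂ)) * Complex.exp (I * (|x - y| : ℝ) ^ 2 / (4 * t))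

/-- for `a>0`, `α≠0`, `aα≠−1` there exist `δ>0`, `c>0` with
`|D(k)| ≥ c|k|` in the strip `|Im k| ≤ δ`; in particular `D` has no zero in the strip
other than `k=0`, which is simple with `D'(0) = 4iα(1+aα) ≠ 0`. -/
theorem stmt10 (a α : ℝ) (ha : 0 < a) (hα : α ≠ 0) (haα : a * α ≠ -1) :
    ∃ δ > 0, ∃ c > 0,
      (∀ k : ℂ, |k.im| ≤ δ → c * ‖k‖ ≤ ‖Dden a α k‖) ∧
      (∀ k : ℂ, |k.im| ≤ δ → Dden a α k = 0 → k = 0) ∧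
      Dden a α 0 = 0 ∧
      HasDerivAt (Dden a α) (4 * I * (α : ℂ) * (1 + (a : ℂ) * (α : ℂ))) 0 ∧
      4 * I * (α : ℂ) * (1 + (a : ℂ) * (α : ℂ)) ≠ 0 := by
  set d : ℂ := 4 * I * (α : ℂ) * (1 + (a : ℂ) * (α : ℂ)) with hd
  -- basic facts
  have hD0 : Dden a α 0 = 0 := by
    simp [Dden]; ring_nf; simp [Complex.I_sq]
  have hder : HasDerivAt (Dden a α) d 0 := by
    have h1 := (((hasDerivAt_id (0:ℂ)).const_mul 2).add_const (I * α)).pow 2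
    have h2 := ((((hasDerivAt_id (0:ℂ)).const_mul (4 * I)).mul_const ((a:ℂ))).cexp).const_mul
      ((α:ℂ)^2)
    have h := h1.add h2
    simp only [id] at h
    convert h using 1
    · rfl
    · rfl
    · funext x; simp [Dden]
    push_cast
    simp [Complex.exp_zero]
    ring
  have hdne : d ≠ 0 := by
    have h1 : (1 : ℂ) + (a:ℂ) * (α:ℂ) ≠ 0 := by
      intro h
      apply haα
      have : ((1 + a * α : ℝ) : ℂ) = 0 := by push_cast; linear_combination h
      have := Complex.ofReal_eq_zero.mp this
      linarith
    rw [hd]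
    simp [Complex.I_ne_zero, hα, h1]
  have hDcont : Continuous (Dden a α) := by unfold Dden; fun_prop
  -- exp norm formula
  have hexpnorm : ∀ k : ℂ, ‖Complex.exp (4 * I * k * a)‖ = Real.exp (-(4 * a * k.im)) := by
    intro k
    rw [Complex.norm_exp]
    congr 1
    simp [Complex.mul_re, Complex.mul_im]
    ring
  -- the slope function g
  set g : ℂ → ℂ := fun k => if k = 0 then d else Dden a α k / k with hgdef
  have hg0 : g 0 = d := if_pos rfl
  have hgne : ∀ k : ℂ, k ≠ 0 → g k = Dden a α k / k := fun k hk => if_neg hk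
  have hgcont : Continuous g := by
    rw [continuous_iff_continuousAt]
    intro k
    rcases eq_or_ne k 0 with rfl | hk
    · rw [ContinuousAt, hg0, ← nhdsNE_sup_pure (0:ℂ), tendsto_sup]
      constructor
      · have hs := hasDerivAt_iff_tendsto_slope.mp hder
        refine hs.congr' ?_
        filter_upwards [self_mem_nhdsWithin] with y hy
        have hy' : y ≠ 0 := hy
        simp [slope, hgne y hy', hD0, div_eq_inv_mul]
      · have : Filter.Tendsto g (pure (0:ℂ)) (pure (g 0)) := Filter.tendsto_pure_pure g 0
        rw [hg0] at this
        exact this.mono_right (pure_le_nhds d)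
    · have h1 : ContinuousAt (fun k => Dden a α k / k) k :=
        (hDcont.continuousAt).div continuousAt_id hk
      refine h1.congr ?_
      filter_upwards [isOpen_compl_singleton.mem_nhds hk] with y hy
      exact (hgne y hy).symm
  -- Dden nonzero on real axis away from 0
  have hDreal : ∀ x : ℝ, x ≠ 0 → Dden a α (x:ℂ) ≠ 0 := by
    intro x hx hDx
    have h1 : ‖(2 * (x:ℂ) + I * α) ^ 2‖ = 4 * x^2 + α^2 := by
      rw [norm_pow]
      have : (2 * (x:ℂ) + I * α) = Complex.mk (2*x) α := by
        apply Complex.ext <;> simp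
      rw [this, Complex.sq_norm]
      simp [Complex.normSq_mk]; ring
    have hnormsq : ‖(α:ℂ)^2‖ = α^2 := by
      rw [← Complex.ofReal_pow, Complex.norm_real, Real.norm_eq_abs,
        _root_.abs_of_nonneg (sq_nonneg α)]
    have h2 : ‖(α:ℂ)^2 * Complex.exp (4 * I * (x:ℂ) * a)‖ = α^2 := by
      rw [norm_mul, hexpnorm, hnormsq]
      simp [Complex.ofReal_im]
    have hkey : (4:ℝ) * x^2 + α^2 ≤ α^2 := by
      calc (4:ℝ) * x^2 + α^2 = ‖(2 * (x:ℂ) + I * α) ^ 2‖ := h1.symm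
        _ = ‖Dden a α (x:ℂ) - (α:ℂ)^2 * Complex.exp (4 * I * (x:ℂ) * a)‖ := by
              unfold Dden; ring_nf
        _ ≤ ‖Dden a α (x:ℂ)‖ + ‖(α:ℂ)^2 * Complex.exp (4 * I * (x:ℂ) * a)‖ := norm_sub_le _ _
        _ = α^2 := by rw [hDx, h2]; simp
    have : x^2 ≤ 0 := by linarith
    exact hx (by nlinarith [sq_nonneg x])
  have hgreal : ∀ x : ℝ, g (x:ℂ) ≠ 0 := by
    intro x
    rcases eq_or_ne x 0 with rfl | hx
    · rw [Complex.ofReal_zero, hg0]; exact hdne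
    · have hx' : (x:ℂ) ≠ 0 := Complex.ofReal_ne_zero.mpr hx
      rw [hgne _ hx']
      exact div_ne_zero (hDreal x hx) hx'
  -- open set where g ≠ 0
  set U : Set ℂ := {k | g k ≠ 0} with hU
  have hUopen : IsOpen U := isOpen_compl_singleton.preimage hgcont
  -- constants
  set C : ℝ := α^2 * Real.exp (4*a) with hC
  have hCpos : 0 < C := by positivity
  set R : ℝ := |α| + C + 2 with hR
  have hRpos : 0 < R := by positivity
  -- compact segment on the real axis
  set K₀ : Set ℂ := (fun x : ℝ => (x:ℂ)) '' Set.Icc (-R) R with hK₀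
  have hK₀cpt : IsCompact K₀ := isCompact_Icc.image Complex.continuous_ofReal
  have hK₀U : K₀ ⊆ U := by
    rintro z ⟨x, -, rfl⟩
    exact hgreal x
  obtain ⟨ε, hεpos, hεsub⟩ := hK₀cpt.exists_thickening_subset_open hUopen hK₀U
  set δ : ℝ := min 1 (ε/2) with hδ
  have hδpos : 0 < δ := lt_min one_pos (by linarith)
  have hδ1 : δ ≤ 1 := min_le_left _ _
  have hδε : δ ≤ ε/2 := min_le_right _ _
  -- the compact strip piece
  set K : Set ℂ := {k : ℂ | |k.im| ≤ δ ∧ ‖k‖ ≤ R} with hK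
  have hKclosed : IsClosed K := by
    have h1 : IsClosed {k : ℂ | |k.im| ≤ δ} :=
      isClosed_le (continuous_abs.comp Complex.continuous_im) continuous_const
    have h2 : IsClosed {k : ℂ | ‖k‖ ≤ R} := isClosed_le continuous_norm continuous_const
    exact h1.inter h2
  have hKcpt : IsCompact K := by
    refine (isCompact_closedBall (0:ℂ) R).of_isClosed_subset hKclosed ?_
    intro k hk
    simpa [Metric.mem_closedBall, Complex.dist_eq] using hk.2
  have hKU : K ⊆ U := by
    intro k hk
    apply hεsub
    rw [Metric.mem_thickening_iff]
    refine ⟨(k.re : ℂ), ⟨k.re, ?_, rfl⟩, ?_⟩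
    · constructor <;> [linarith [neg_abs_le k.re, (Complex.abs_re_le_norm k).trans hk.2];
        linarith [le_abs_self k.re, (Complex.abs_re_le_norm k).trans hk.2]]
    · have : dist k (k.re : ℂ) = |k.im| := by
        rw [Complex.dist_eq]
        have : k - (k.re : ℂ) = Complex.mk 0 k.im := by apply Complex.ext <;> simp
        rw [this, Complex.norm_def, Complex.normSq_mk]
        simpa using Real.sqrt_mul_self_eq_abs k.im
      rw [this]
      calc |k.im| ≤ δ := hk.1
        _ ≤ ε/2 := hδε
        _ < ε := by linarith
  -- minimum on K
  have hK0mem : (0:ℂ) ∈ K := by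
    constructor <;> simp [hδpos.le, hRpos.le]
  obtain ⟨k₀, hk₀K, hk₀min⟩ := hKcpt.exists_isMinOn ⟨0, hK0mem⟩ (hgcont.norm.continuousOn)
  set c₁ : ℝ := ‖g k₀‖ with hc₁
  have hc₁pos : 0 < c₁ := norm_pos_iff.mpr (hKU hk₀K)
  set c : ℝ := min c₁ 1 with hc
  have hcpos : 0 < c := lt_min hc₁pos one_pos
  -- large |k| estimate
  have hlarge : ∀ k : ℂ, |k.im| ≤ δ → R ≤ ‖k‖ → ‖k‖ ≤ ‖Dden a α k‖ := by
    intro k him hkR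
    have hkα : |α| ≤ ‖k‖ := by rw [hR] at hkR; linarith
    have h1 : ‖k‖ ≤ ‖2 * k + I * α‖ := by
      have ht := norm_sub_le (2 * k + I * (α:ℂ)) (I * α)
      have heq : 2 * k + I * (α:ℂ) - I * α = 2 * k := by ring
      rw [heq] at ht
      have h2k : ‖(2:ℂ) * k‖ = 2 * ‖k‖ := by rw [norm_mul]; simp
      have hIα : ‖I * (α:ℂ)‖ = |α| := by simp
      rw [h2k, hIα] at ht
      linarith
    have h2 : ‖Complex.exp (4 * I * k * a)‖ ≤ Real.exp (4*a) := by
      rw [hexpnorm]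
      apply Real.exp_le_exp.mpr
      have : |4 * a * k.im| ≤ 4 * a * δ := by
        rw [abs_mul, _root_.abs_of_nonneg (by positivity : (0:ℝ) ≤ 4 * a)]
        exact mul_le_mul_of_nonneg_left him (by positivity)
      have h4 : 4 * a * δ ≤ 4 * a := by nlinarith
      nlinarith [neg_abs_le (4 * a * k.im)]
    have hnormsq : ‖(α:ℂ)^2‖ = α^2 := by
      rw [← Complex.ofReal_pow, Complex.norm_real, Real.norm_eq_abs,
        _root_.abs_of_nonneg (sq_nonneg α)]
    have h3 : ‖(α:ℂ)^2 * Complex.exp (4 * I * k * a)‖ ≤ C := by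
      rw [norm_mul, hnormsq, hC]
      exact mul_le_mul_of_nonneg_left h2 (sq_nonneg α)
    have h4 : ‖k‖^2 - C ≤ ‖Dden a α k‖ := by
      have hsq : ‖k‖^2 ≤ ‖(2 * k + I * α) ^ 2‖ := by
        rw [norm_pow]
        exact pow_le_pow_left₀ (norm_nonneg k) h1 2
      have := norm_sub_le (Dden a α k) ((α:ℂ)^2 * Complex.exp (4 * I * k * a))
      have heq : Dden a α k - (α:ℂ)^2 * Complex.exp (4 * I * k * a) = (2 * k + I * α) ^ 2 := by
        unfold Dden; ring
      rw [heq] at this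
      linarith
    have hk2 : C + 2 ≤ ‖k‖ := by rw [hR] at hkR; linarith [abs_nonneg α]
    have : ‖k‖ + C ≤ ‖k‖^2 := by
      nlinarith [mul_le_mul_of_nonneg_right hk2 (norm_nonneg k), hCpos]
    linarith
  have hmain : ∀ k : ℂ, |k.im| ≤ δ → c * ‖k‖ ≤ ‖Dden a α k‖ := by
    intro k him
    rcases le_or_gt ‖k‖ R with hkR | hkR
    · rcases eq_or_ne k 0 with rfl | hk
      · simp
      · have hkK : k ∈ K := ⟨him, hkR⟩
        have hmin : c₁ ≤ ‖g k‖ := hk₀min hkK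
        rw [hgne k hk, norm_div] at hmin
        have hknorm : 0 < ‖k‖ := norm_pos_iff.mpr hk
        calc c * ‖k‖ ≤ c₁ * ‖k‖ := by
              exact mul_le_mul_of_nonneg_right (min_le_left _ _) hknorm.le
          _ ≤ (‖Dden a α k‖ / ‖k‖) * ‖k‖ := mul_le_mul_of_nonneg_right hmin hknorm.le
          _ = ‖Dden a α k‖ := div_mul_cancel₀ _ (ne_of_gt hknorm)
    · have := hlarge k him hkR.le
      calc c * ‖k‖ ≤ 1 * ‖k‖ :=
            mul_le_mul_of_nonneg_right (min_le_right _ _) (norm_nonneg k)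
        _ = ‖k‖ := one_mul _
        _ ≤ ‖Dden a α k‖ := this
  refine ⟨δ, hδpos, c, hcpos, hmain, ?_, hD0, hder, hdne⟩
  intro k him hDk
  have h1 := hmain k him
  rw [hDk, norm_zero] at h1
  have : ‖k‖ ≤ 0 := by
    by_contra hk
    push_neg at hk
    nlinarith
  simpa using le_antisymm this (norm_nonneg k)
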